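/- For all n×n real matrices A and X, the Fréchet derivative of the matrix exponential satisfies (d exp)_A(X) = ∑_{k=0}^∞ (−ad_A)ᵏ(exp(A) · X) / (k+1)!, where ad_A(Y) = AY − YA, so that (−ad_A)(Y) = YA − AY, and (−ad_A)ᵏ denotes the k-fold iterate of this linear map; the series converges in the space of n×n real matrices. -/

import Mathlib

open Matrix

attribute [local instance] Matrix.linftyOpNormedRing Matrix.linftyOpNormedAlgebra

namespace ExpFderivAux

open Finset

open Finset

noncomputable def Tsum (i j : ℕ) : ℝ :=
  ∑ l ∈ range (i + 1), (-1 : ℝ) ^ l * (i.choose l) * ((j : ℝ) + l + 1)⁻¹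

lemma Tsum_succ (i j : ℕ) : Tsum (i + 1) j = Tsum i j - Tsum i (j + 1) := by
  unfold Tsum
  rw [Finset.sum_range_succ'
    (fun l => (-1 : ℝ) ^ l * ((i + 1).choose l) * ((j : ℝ) + l + 1)⁻¹) (i + 1)]
  have split : ∀ l ∈ range (i + 1),
      (-1 : ℝ) ^ (l + 1) * ((i + 1).choose (l + 1)) * ((j : ℝ) + (l + 1 : ℕ) + 1)⁻¹
        = -((-1 : ℝ) ^ l * (i.choose l) * (((j + 1 : ℕ) : ℝ) + l + 1)⁻¹)
          + (-1 : ℝ) ^ (l + 1) * (i.choose (l + 1)) * ((j : ℝ) + (l + 1 : ℕ) + 1)⁻¹ := by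
    intro l _
    rw [Nat.choose_succ_succ]
    push_cast
    ring
  rw [Finset.sum_congr rfl split, Finset.sum_add_distrib]
  have h2 : ∑ l ∈ range (i + 1),
      (-1 : ℝ) ^ (l + 1) * (i.choose (l + 1)) * ((j : ℝ) + (l + 1 : ℕ) + 1)⁻¹
        = (∑ l ∈ range (i + 1), (-1 : ℝ) ^ l * (i.choose l) * ((j : ℝ) + l + 1)⁻¹)
          - (-1 : ℝ) ^ 0 * (i.choose 0) * ((j : ℝ) + (0 : ℕ) + 1)⁻¹ := by
    rw [Finset.sum_range_succ
      (fun l => (-1 : ℝ) ^ (l + 1) * (i.choose (l + 1)) * ((j : ℝ) + (l + 1 : ℕ) + 1)⁻¹) i]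
    rw [Finset.sum_range_succ'
      (fun l => (-1 : ℝ) ^ l * (i.choose l) * ((j : ℝ) + l + 1)⁻¹) i]
    simp [Nat.choose_succ_self]
  rw [Finset.sum_neg_distrib, h2]
  simp only [Nat.choose_zero_right, Nat.cast_one, Nat.cast_zero, pow_zero]
  ring

lemma Tsum_eq (i : ℕ) : ∀ j : ℕ,
    Tsum i j = (i.factorial * j.factorial) / ((i + j + 1).factorial) := by
  induction i with
  | zero =>
    intro j
    have h0 : ((j + 1).factorial : ℝ) ≠ 0 := by
      exact_mod_cast (Nat.factorial_pos (j + 1)).ne'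
    unfold Tsum
    rw [Finset.sum_range_one]
    have e : (0 : ℕ) + j + 1 = j + 1 := by ring
    rw [e, Nat.factorial_succ j]
    push_cast
    rw [eq_div_iff (by push_cast at h0 ⊢; positivity)]
    have : ((j : ℝ) + 1) ≠ 0 := by positivity
    field_simp
    simp
  | succ i ih =>
    intro j
    rw [Tsum_succ, ih j, ih (j + 1)]
    have e1 : i + (j + 1) + 1 = (i + j + 1) + 1 := by ring
    have e2 : (i + 1) + j + 1 = (i + j + 1) + 1 := by ring
    rw [e1, e2, Nat.factorial_succ (i + j + 1), Nat.factorial_succ i, Nat.factorial_succ j]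
    have hF : ((i + j + 1).factorial : ℝ) ≠ 0 := by
      exact_mod_cast (Nat.factorial_pos _).ne'
    have hI : (i.factorial : ℝ) ≠ 0 := by exact_mod_cast (Nat.factorial_pos _).ne'
    have hJ : (j.factorial : ℝ) ≠ 0 := by exact_mod_cast (Nat.factorial_pos _).ne'
    push_cast
    field_simp
    ring

noncomputable def coefE (a b : ℕ) : ℝ :=
  ((-1) ^ b * ((a + b).choose a)) / ((a + b + 1).factorial)

lemma coefE_abs_le (a b : ℕ) :
    |coefE a b| ≤ (a.factorial : ℝ)⁻¹ * (b.factorial : ℝ)⁻¹ := by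
  have key : ((a + b).choose a : ℝ) * (a.factorial * b.factorial)
      = ((a + b).factorial : ℝ) := by
    have h := Nat.choose_mul_factorial_mul_factorial (Nat.le_add_right a b)
    rw [Nat.add_sub_cancel_left] at h
    exact_mod_cast congrArg (Nat.cast : ℕ → ℝ) (by rw [← h]; ring)
  have ha : (0 : ℝ) < a.factorial := by exact_mod_cast a.factorial_pos
  have hb : (0 : ℝ) < b.factorial := by exact_mod_cast b.factorial_pos
  have hs : (0 : ℝ) < ((a + b + 1).factorial : ℝ) := by
    exact_mod_cast (a + b + 1).factorial_pos
  unfold coefE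
  rw [abs_div, abs_mul, abs_pow, abs_neg, abs_one, one_pow, one_mul,
    Nat.abs_cast, Nat.abs_cast, ← mul_inv, ← one_div ((a.factorial : ℝ) * b.factorial)]
  rw [div_le_div_iff₀ hs (by positivity)]
  have hfle : ((a + b).factorial : ℝ) ≤ ((a + b + 1).factorial : ℝ) := by
    exact_mod_cast Nat.factorial_le (Nat.le_succ _)
  nlinarith [key, hfle]

lemma coefE_sum (a i : ℕ) :
    ∑ p ∈ antidiagonal i, coefE a p.1 * ((p.2.factorial : ℝ))⁻¹
      = (((i + a + 1).factorial : ℝ))⁻¹ := by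
  rw [Nat.sum_antidiagonal_eq_sum_range_succ_mk]
  have hterm : ∀ l ∈ range (i + 1),
      coefE a l * (((i - l).factorial : ℝ))⁻¹
        = ((i.factorial : ℝ)⁻¹ * (a.factorial : ℝ)⁻¹)
          * ((-1 : ℝ) ^ l * (i.choose l) * ((a : ℝ) + l + 1)⁻¹) := by
    intro l hl
    have hli : l ≤ i := Nat.lt_succ_iff.mp (Finset.mem_range.mp hl)
    unfold coefE
    have hc1 : ((a + l).choose a : ℝ)
        = ((a + l).factorial) / (a.factorial * l.factorial) := by
      rw [Nat.cast_choose ℝ (Nat.le_add_right a l), Nat.add_sub_cancel_left]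
    have hc2 : (i.choose l : ℝ) = (i.factorial) / (l.factorial * (i - l).factorial) :=
      Nat.cast_choose ℝ hli
    have hfs : ((a + l + 1).factorial : ℝ) = ((a : ℝ) + l + 1) * ((a + l).factorial) := by
      rw [Nat.factorial_succ]; push_cast; ring
    have h1 : ((a + l).factorial : ℝ) ≠ 0 := by exact_mod_cast (a + l).factorial_pos.ne'
    have h2 : (a.factorial : ℝ) ≠ 0 := by exact_mod_cast a.factorial_pos.ne'
    have h3 : (l.factorial : ℝ) ≠ 0 := by exact_mod_cast l.factorial_pos.ne'
    have h4 : ((i - l).factorial : ℝ) ≠ 0 := by exact_mod_cast (i - l).factorial_pos.ne'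
    have h5 : (i.factorial : ℝ) ≠ 0 := by exact_mod_cast i.factorial_pos.ne'
    have h6 : ((a : ℝ) + l + 1) ≠ 0 := by positivity
    rw [hc1, hc2, hfs]
    field_simp
  rw [Finset.sum_congr rfl hterm, ← Finset.mul_sum]
  have hT := Tsum_eq i a
  unfold Tsum at hT
  rw [hT]
  have h5 : (i.factorial : ℝ) ≠ 0 := by exact_mod_cast i.factorial_pos.ne'
  have h2 : (a.factorial : ℝ) ≠ 0 := by exact_mod_cast a.factorial_pos.ne'
  have h7 : (((i + a + 1).factorial : ℝ)) ≠ 0 := by exact_mod_cast (i + a + 1).factorial_pos.ne'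
  field_simp

lemma inv_factorial_add_le (a b : ℕ) :
    (((a + b + 1).factorial : ℝ))⁻¹ ≤ (a.factorial : ℝ)⁻¹ * (b.factorial : ℝ)⁻¹ := by
  rw [← mul_inv]
  have h1 : (a.factorial * b.factorial : ℕ) ≤ (a + b + 1).factorial := by
    calc a.factorial * b.factorial ≤ (a + b).factorial :=
          Nat.le_of_dvd (a + b).factorial_pos (Nat.factorial_mul_factorial_dvd_factorial_add a b)
      _ ≤ (a + b + 1).factorial := Nat.factorial_le (Nat.le_succ _)
  have h2 : (0 : ℝ) < (a.factorial * b.factorial : ℕ) := by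
    have := Nat.mul_pos a.factorial_pos b.factorial_pos
    exact_mod_cast this
  have h3 : ((a.factorial * b.factorial : ℕ) : ℝ) ≤ ((a + b + 1).factorial : ℝ) := by
    exact_mod_cast h1
  calc (((a + b + 1).factorial : ℝ))⁻¹ ≤ (((a.factorial * b.factorial : ℕ) : ℝ))⁻¹ := by
        apply inv_anti₀ h2 h3
    _ = ((a.factorial : ℝ) * (b.factorial : ℝ))⁻¹ := by push_cast; ring_nf

variable {n : ℕ}

/-- Matrix endomorphisms, with the topology coming from the norm. -/
abbrev MCLM (n : ℕ) : Type :=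
  @ContinuousLinearMap ℝ ℝ _ _ (RingHom.id ℝ) (Matrix (Fin n) (Fin n) ℝ)
    (@UniformSpace.toTopologicalSpace _ PseudoMetricSpace.toUniformSpace) _
    (Matrix (Fin n) (Fin n) ℝ) (@UniformSpace.toTopologicalSpace _ PseudoMetricSpace.toUniformSpace)
    _ _ _

instance : CompleteSpace (MCLM n) :=
  FiniteDimensional.complete ℝ (MCLM n)

/-- The continuous linear map `Z ↦ P * Z * Q` on matrices. -/
noncomputable def mulLR (P Q : Matrix (Fin n) (Fin n) ℝ) :
    MCLM n :=
  LinearMap.toContinuousLinearMap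
    ((LinearMap.mulRight ℝ Q).comp (LinearMap.mulLeft ℝ P))

@[simp] lemma mulLR_apply (P Q Z : Matrix (Fin n) (Fin n) ℝ) :
    mulLR P Q Z = P * Z * Q := by
  simp [mulLR]

lemma norm_mul_pow_le (Z B : Matrix (Fin n) (Fin n) ℝ) (j : ℕ) :
    ‖Z * B ^ j‖ ≤ ‖Z‖ * ‖B‖ ^ j := by
  induction j with
  | zero => simp
  | succ j ih =>
    rw [pow_succ, ← mul_assoc, pow_succ, ← mul_assoc]
    calc ‖Z * B ^ j * B‖ ≤ ‖Z * B ^ j‖ * ‖B‖ := norm_mul_le _ _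
      _ ≤ ‖Z‖ * ‖B‖ ^ j * ‖B‖ := by gcongr

lemma norm_pow_mul_le (B Z : Matrix (Fin n) (Fin n) ℝ) (i : ℕ) :
    ‖B ^ i * Z‖ ≤ ‖B‖ ^ i * ‖Z‖ := by
  induction i with
  | zero => simp
  | succ i ih =>
    rw [pow_succ', mul_assoc, pow_succ']
    calc ‖B * (B ^ i * Z)‖ ≤ ‖B‖ * ‖B ^ i * Z‖ := norm_mul_le _ _
      _ ≤ ‖B‖ * (‖B‖ ^ i * ‖Z‖) := by gcongr
      _ = ‖B‖ * ‖B‖ ^ i * ‖Z‖ := by ring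

lemma norm_tri_le (B : Matrix (Fin n) (Fin n) ℝ) (i j : ℕ) (Z : Matrix (Fin n) (Fin n) ℝ) :
    ‖B ^ i * Z * B ^ j‖ ≤ ‖B‖ ^ i * ‖Z‖ * ‖B‖ ^ j :=
  calc ‖B ^ i * Z * B ^ j‖ ≤ ‖B ^ i * Z‖ * ‖B‖ ^ j := norm_mul_pow_le _ _ _
    _ ≤ (‖B‖ ^ i * ‖Z‖) * ‖B‖ ^ j := by
        have := norm_pow_mul_le B Z i
        gcongr

lemma norm_mulLR_pow_le (B : Matrix (Fin n) (Fin n) ℝ) (i j : ℕ) :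
    ‖mulLR (B ^ i) (B ^ j)‖ ≤ ‖B‖ ^ i * ‖B‖ ^ j :=
  ContinuousLinearMap.opNorm_le_bound _ (by positivity) fun Z => by
    rw [mulLR_apply]
    calc ‖B ^ i * Z * B ^ j‖ ≤ ‖B‖ ^ i * ‖Z‖ * ‖B‖ ^ j := norm_tri_le B i j Z
      _ = ‖B‖ ^ i * ‖B‖ ^ j * ‖Z‖ := by ring

/-- The iterate of `Y ↦ Y*A - A*Y` expanded binomially. -/
lemma iterate_negAd_eq (A Y : Matrix (Fin n) (Fin n) ℝ) (k : ℕ) :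
    (fun Y : Matrix (Fin n) (Fin n) ℝ => Y * A - A * Y)^[k] Y
      = ∑ p ∈ antidiagonal k,
          (((-1 : ℝ) ^ p.2) * (k.choose p.1)) • (A ^ p.2 * Y * A ^ p.1) := by
  have hfun : (fun Y : Matrix (Fin n) (Fin n) ℝ => Y * A - A * Y)
      = ⇑(LinearMap.mulRight ℝ A - LinearMap.mulLeft ℝ A) := by
    funext Z
    simp [LinearMap.sub_apply]
  rw [hfun, ← Module.End.pow_apply]
  have hcomm : Commute (LinearMap.mulRight ℝ A) (-(LinearMap.mulLeft ℝ A)) :=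
    ((LinearMap.commute_mulLeft_right (R := ℝ) A A).symm).neg_right
  have hnegpow : ∀ (m : ℕ) (Z : Matrix (Fin n) (Fin n) ℝ),
      ((-(LinearMap.mulLeft ℝ A)) ^ m) Z = ((-1 : ℝ) ^ m) • (A ^ m * Z) := by
    intro m
    induction m with
    | zero => intro Z; simp
    | succ m ih =>
      intro Z
      rw [pow_succ, Module.End.mul_apply, LinearMap.neg_apply, LinearMap.mulLeft_apply,
        map_neg, ih, pow_succ (-1 : ℝ), pow_succ' A]
      have hAc : A ^ m * (A * Z) = A * (A ^ m * Z) := by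
        rw [← mul_assoc, ← pow_succ, pow_succ', mul_assoc]
      rw [hAc, ← neg_smul, mul_assoc]
      congr 1
      ring
  rw [sub_eq_add_neg, hcomm.add_pow' k]
  rw [LinearMap.coe_sum, Finset.sum_apply]
  refine Finset.sum_congr rfl fun p hp => ?_
  rw [LinearMap.smul_apply, Module.End.mul_apply, hnegpow, LinearMap.pow_mulRight,
    LinearMap.map_smul, LinearMap.mulRight_apply, ← Nat.cast_smul_eq_nsmul ℝ, smul_smul,
    mul_comm]

/-- Group a summable family over `ℕ × ℕ` along antidiagonals. -/
lemma grouping {f : ℕ × ℕ → Matrix (Fin n) (Fin n) ℝ} (hf : Summable f) :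
    Summable (fun k => ∑ p ∈ antidiagonal k, f p)
      ∧ (∑' k, ∑ p ∈ antidiagonal k, f p) = ∑' p, f p := by
  have h2 : Summable fun x : Σ k : ℕ, {p : ℕ × ℕ // p ∈ antidiagonal k} => f x.2 :=
    (Finset.HasAntidiagonal.sigmaAntidiagonalEquivProd.summable_iff (f := f)).2 hf
  have hfib : ∀ k : ℕ, Summable fun c : {p : ℕ × ℕ // p ∈ antidiagonal k} => f c :=
    fun k => (hasSum_fintype _).summable
  constructor
  · have h3 := h2.sigma' hfib
    have h4 : ∀ k : ℕ, ∑' (c : {p : ℕ × ℕ // p ∈ antidiagonal k}), f c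
        = ∑ p ∈ antidiagonal k, f p := fun k => Finset.tsum_subtype _ f
    simpa only [h4] using h3
  · have h4 : ∀ k : ℕ, ∑' (c : {p : ℕ × ℕ // p ∈ antidiagonal k}), f c
        = ∑ p ∈ antidiagonal k, f p := fun k => Finset.tsum_subtype _ f
    rw [← Finset.HasAntidiagonal.sigmaAntidiagonalEquivProd.tsum_eq f]
    have h5 : ∑' (x : Σ k : ℕ, {p : ℕ × ℕ // p ∈ antidiagonal k}), f x.2
        = ∑' (k : ℕ), ∑' (c : {p : ℕ × ℕ // p ∈ antidiagonal k}), f c :=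
      Summable.tsum_sigma' hfib h2
    calc ∑' (k : ℕ), ∑ p ∈ antidiagonal k, f p
        = ∑' (k : ℕ), ∑' (c : {p : ℕ × ℕ // p ∈ antidiagonal k}), f c :=
          tsum_congr fun k => (h4 k).symm
      _ = ∑' (x : Σ k : ℕ, {p : ℕ × ℕ // p ∈ antidiagonal k}), f x.2 := h5.symm
      _ = ∑' (c : Σ k : ℕ, {p : ℕ × ℕ // p ∈ antidiagonal k}),
            f (Finset.HasAntidiagonal.sigmaAntidiagonalEquivProd c) := rfl

lemma hasFDerivAt_pow_matrix (N : ℕ) (B : Matrix (Fin n) (Fin n) ℝ) :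
    HasFDerivAt (fun Y : Matrix (Fin n) (Fin n) ℝ => Y ^ N)
      (∑ i ∈ range N, mulLR (B ^ i) (B ^ (N - 1 - i))) B := by
  induction N with
  | zero =>
    simp only [pow_zero, range_zero, Finset.sum_empty]
    exact hasFDerivAt_const _ _
  | succ N ih =>
    have h := ih.mul' (hasFDerivAt_id B)
    have hfun : (fun Y : Matrix (Fin n) (Fin n) ℝ => Y ^ (N + 1))
        = fun Y => Y ^ N * id Y := by
      funext Y; rw [pow_succ]; rfl
    rw [hfun]
    refine h.congr_fderiv ?_
    refine ContinuousLinearMap.ext fun Z => ?_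
    show B ^ N * Z + (∑ i ∈ range N, mulLR (B ^ i) (B ^ (N - 1 - i))) Z * B
      = (∑ i ∈ range (N + 1), mulLR (B ^ i) (B ^ (N + 1 - 1 - i))) Z
    simp only [ContinuousLinearMap.add_apply, ContinuousLinearMap.coe_smul',
      Pi.smul_apply, ContinuousLinearMap.coe_id', id_eq,
      ContinuousLinearMap.smulRight_apply, ContinuousLinearMap.coe_sum',
      Finset.sum_apply, mulLR_apply, smul_eq_mul]
    rw [Finset.sum_range_succ]
    have hlast : N + 1 - 1 - N = 0 := by omega
    rw [hlast, pow_zero, mul_one, Finset.sum_mul]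
    have hstep : ∀ i ∈ range N,
        B ^ i * Z * B ^ (N + 1 - 1 - i) = B ^ i * Z * B ^ (N - 1 - i) * B := by
      intro i hi
      have : N + 1 - 1 - i = (N - 1 - i) + 1 := by
        have := Finset.mem_range.mp hi; omega
      rw [this, pow_succ, ← mul_assoc]
    rw [Finset.sum_congr rfl hstep]
    exact add_comm _ _

end ExpFderivAux

set_option maxHeartbeats 2000000 in
open ExpFderivAux Finset in
/-- The Fréchet derivative of the matrix exponential is given by the convergent series
`(d exp)_A(X) = ∑_{k=0}^∞ (-ad_A)ᵏ(exp(A) X) / (k+1)!`, where `(-ad_A)(Y) = Y A - A Y`. -/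
theorem fderiv_exp_eq_tsum_neg_ad {n : ℕ} (A X : Matrix (Fin n) (Fin n) ℝ) :
    Summable (fun k : ℕ =>
      ((Nat.factorial (k + 1) : ℝ))⁻¹ •
        (fun Y : Matrix (Fin n) (Fin n) ℝ => Y * A - A * Y)^[k]
          (NormedSpace.exp A * X)) ∧
    fderiv ℝ (NormedSpace.exp) A X =
      ∑' k : ℕ,
        ((Nat.factorial (k + 1) : ℝ))⁻¹ •
          (fun Y : Matrix (Fin n) (Fin n) ℝ => Y * A - A * Y)^[k]
            (NormedSpace.exp A * X) := by
  classical
  set E : Matrix (Fin n) (Fin n) ℝ := NormedSpace.exp A with hE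
  have hsumr : Summable (fun a : ℕ => ‖A‖ ^ a / a.factorial) :=
    Real.summable_pow_div_factorial ‖A‖
  -- the function `uu (a, b) = coefE a b • (A^b (E X) A^a)`
  set uu : ℕ × ℕ → Matrix (Fin n) (Fin n) ℝ :=
    fun p => coefE p.1 p.2 • (A ^ p.2 * (E * X) * A ^ p.1) with huu_def
  have hbound_u : ∀ p : ℕ × ℕ,
      ‖uu p‖ ≤ (‖E * X‖ * (‖A‖ ^ p.1 / p.1.factorial)) * (‖A‖ ^ p.2 / p.2.factorial) := by
    rintro ⟨a, b⟩
    show ‖coefE a b • (A ^ b * (E * X) * A ^ a)‖ ≤ _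
    rw [norm_smul, Real.norm_eq_abs]
    have h1 : (0:ℝ) < a.factorial := by exact_mod_cast a.factorial_pos
    have h2 : (0:ℝ) < b.factorial := by exact_mod_cast b.factorial_pos
    calc |coefE a b| * ‖A ^ b * (E * X) * A ^ a‖
        ≤ ((a.factorial : ℝ)⁻¹ * (b.factorial : ℝ)⁻¹) * (‖A‖ ^ b * ‖E * X‖ * ‖A‖ ^ a) :=
          mul_le_mul (coefE_abs_le a b) (norm_tri_le A b a (E * X)) (norm_nonneg _)
            (by positivity)
      _ = (‖E * X‖ * (‖A‖ ^ a / a.factorial)) * (‖A‖ ^ b / b.factorial) := by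
          simp only [div_eq_mul_inv]
          ring
  have hprod_u : Summable (fun p : ℕ × ℕ =>
      (‖E * X‖ * (‖A‖ ^ p.1 / p.1.factorial)) * (‖A‖ ^ p.2 / p.2.factorial)) :=
    (hsumr.mul_left ‖E * X‖).mul_of_nonneg hsumr
      (fun a => by positivity) (fun b => by positivity)
  have hu : Summable uu := Summable.of_norm_bounded hprod_u hbound_u
  have hgroup_u := grouping hu
  have h_ck : ∀ k : ℕ,
      ((Nat.factorial (k + 1) : ℝ))⁻¹ •
        (fun Y : Matrix (Fin n) (Fin n) ℝ => Y * A - A * Y)^[k] (E * X)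
        = ∑ p ∈ antidiagonal k, uu p := by
    intro k
    rw [iterate_negAd_eq A (E * X) k, Finset.smul_sum]
    refine Finset.sum_congr rfl fun p hp => ?_
    have hk : p.1 + p.2 = k := mem_antidiagonal.mp hp
    show _ = coefE p.1 p.2 • _
    rw [smul_smul]
    congr 1
    rw [coefE, ← hk, div_eq_mul_inv, mul_comm]
  have hc_eq : (fun k : ℕ => ((Nat.factorial (k + 1) : ℝ))⁻¹ •
        (fun Y : Matrix (Fin n) (Fin n) ℝ => Y * A - A * Y)^[k] (E * X))
      = fun k => ∑ p ∈ antidiagonal k, uu p := funext h_ck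
  refine ⟨by rw [hc_eq]; exact hgroup_u.1, ?_⟩
  rw [hc_eq, hgroup_u.2]
  -- the derivative side
  set R : ℝ := ‖A‖ + 1 with hR
  set f' : ℕ → Matrix (Fin n) (Fin n) ℝ →
      (MCLM n) :=
    fun N B => ((N.factorial : ℝ))⁻¹ • ∑ i ∈ range N, mulLR (B ^ i) (B ^ (N - 1 - i))
    with hf'_def
  have hub : Summable (fun N : ℕ => ((N.factorial : ℝ))⁻¹ * (N * R ^ (N - 1))) := by
    apply (summable_nat_add_iff 1).1
    refine (Real.summable_pow_div_factorial R).congr fun N => ?_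
    have h1 : ((N.factorial : ℝ)) ≠ 0 := by
      exact_mod_cast N.factorial_pos.ne'
    rw [Nat.add_sub_cancel, Nat.factorial_succ]
    push_cast
    field_simp
  have hballA : A ∈ Metric.ball (0 : Matrix (Fin n) (Fin n) ℝ) R := by
    rw [Metric.mem_ball, dist_zero_right, hR]
    linarith
  have hball0 : (0 : Matrix (Fin n) (Fin n) ℝ) ∈ Metric.ball (0 : Matrix (Fin n) (Fin n) ℝ) R := by
    rw [Metric.mem_ball, dist_self, hR]
    have := norm_nonneg A
    linarith
  have hder : ∀ (N : ℕ) (B : Matrix (Fin n) (Fin n) ℝ),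
      B ∈ Metric.ball (0 : Matrix (Fin n) (Fin n) ℝ) R →
      HasFDerivAt (fun Y : Matrix (Fin n) (Fin n) ℝ => ((N.factorial : ℝ))⁻¹ • Y ^ N)
        (f' N B) B :=
    fun N B _ => (hasFDerivAt_pow_matrix N B).const_smul ((N.factorial : ℝ))⁻¹
  have hbnd : ∀ (N : ℕ) (B : Matrix (Fin n) (Fin n) ℝ),
      B ∈ Metric.ball (0 : Matrix (Fin n) (Fin n) ℝ) R →
      ‖f' N B‖ ≤ ((N.factorial : ℝ))⁻¹ * (N * R ^ (N - 1)) := by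
    intro N B hB
    have hBR : ‖B‖ ≤ R := by
      rw [Metric.mem_ball, dist_zero_right] at hB
      linarith
    have hfact : (0:ℝ) ≤ ((N.factorial : ℝ))⁻¹ := by positivity
    refine ContinuousLinearMap.opNorm_le_bound _ (by positivity) fun Z => ?_
    have happ : f' N B Z = ((N.factorial : ℝ))⁻¹ •
        ((∑ i ∈ range N, mulLR (B ^ i) (B ^ (N - 1 - i))) Z) := rfl
    rw [happ, ContinuousLinearMap.coe_sum', Finset.sum_apply, norm_smul, Real.norm_eq_abs,
      abs_of_nonneg hfact]
    calc ((N.factorial : ℝ))⁻¹ * ‖∑ i ∈ range N, mulLR (B ^ i) (B ^ (N - 1 - i)) Z‖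
        ≤ ((N.factorial : ℝ))⁻¹ * ∑ _i ∈ range N, R ^ (N - 1) * ‖Z‖ := by
          refine mul_le_mul_of_nonneg_left ?_ hfact
          refine le_trans (norm_sum_le _ _) (Finset.sum_le_sum fun i hi => ?_)
          rw [mulLR_apply]
          refine le_trans (norm_tri_le B i (N - 1 - i) Z) ?_
          have he : i + (N - 1 - i) = N - 1 := by
            have := mem_range.mp hi; omega
          have hpow : ‖B‖ ^ i * ‖B‖ ^ (N - 1 - i) = ‖B‖ ^ (N - 1) := by
            rw [← pow_add, he]
          calc ‖B‖ ^ i * ‖Z‖ * ‖B‖ ^ (N - 1 - i)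
              = (‖B‖ ^ i * ‖B‖ ^ (N - 1 - i)) * ‖Z‖ := by ring
            _ = ‖B‖ ^ (N - 1) * ‖Z‖ := by rw [hpow]
            _ ≤ R ^ (N - 1) * ‖Z‖ :=
                mul_le_mul_of_nonneg_right
                  (pow_le_pow_left₀ (norm_nonneg B) hBR _) (norm_nonneg Z)
      _ = ((N.factorial : ℝ))⁻¹ * (N * R ^ (N - 1)) * ‖Z‖ := by
          rw [Finset.sum_const, card_range, nsmul_eq_mul]
          ring
  have hsum0 : Summable (fun N : ℕ =>
      ((N.factorial : ℝ))⁻¹ • (0 : Matrix (Fin n) (Fin n) ℝ) ^ N) :=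
    NormedSpace.expSeries_summable' (𝕂 := ℝ) (0 : Matrix (Fin n) (Fin n) ℝ)
  have hHas : HasFDerivAt
      (fun B : Matrix (Fin n) (Fin n) ℝ => ∑' N : ℕ, ((N.factorial : ℝ))⁻¹ • B ^ N)
      (∑' N : ℕ, f' N A) A :=
    hasFDerivAt_tsum_of_isPreconnected hub Metric.isOpen_ball
      (convex_ball _ _).isPreconnected hder hbnd hball0 hsum0 hballA
  have hexp_eq : (NormedSpace.exp : Matrix (Fin n) (Fin n) ℝ → Matrix (Fin n) (Fin n) ℝ)
      = fun B => ∑' N : ℕ, ((N.factorial : ℝ))⁻¹ • B ^ N := NormedSpace.exp_eq_tsum ℝ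
  have hfder : fderiv ℝ (NormedSpace.exp) A = ∑' N : ℕ, f' N A := by
    rw [hexp_eq]
    exact hHas.fderiv
  have hsum_f'A : Summable (fun N : ℕ => f' N A) :=
    Summable.of_norm_bounded hub (fun N => hbnd N A hballA)
  have happly : fderiv ℝ (NormedSpace.exp) A X = ∑' N : ℕ, f' N A X := by
    rw [hfder]
    exact (ContinuousLinearMap.apply ℝ (Matrix (Fin n) (Fin n) ℝ) X).map_tsum hsum_f'A
  -- `w'`
  set w' : ℕ × ℕ → Matrix (Fin n) (Fin n) ℝ :=
    fun q => (((q.1 + q.2 + 1).factorial : ℝ))⁻¹ • (A ^ q.1 * X * A ^ q.2) with hw'_def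
  have hprod_w : Summable (fun p : ℕ × ℕ =>
      (‖X‖ * (‖A‖ ^ p.1 / p.1.factorial)) * (‖A‖ ^ p.2 / p.2.factorial)) :=
    (hsumr.mul_left ‖X‖).mul_of_nonneg hsumr
      (fun a => by positivity) (fun b => by positivity)
  have hbound_w : ∀ q : ℕ × ℕ,
      ‖w' q‖ ≤ (‖X‖ * (‖A‖ ^ q.1 / q.1.factorial)) * (‖A‖ ^ q.2 / q.2.factorial) := by
    rintro ⟨i, a⟩
    show ‖(((i + a + 1).factorial : ℝ))⁻¹ • (A ^ i * X * A ^ a)‖ ≤ _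
    rw [norm_smul, Real.norm_eq_abs, abs_of_nonneg (by positivity)]
    have h1 : (0:ℝ) < i.factorial := by exact_mod_cast i.factorial_pos
    have h2 : (0:ℝ) < a.factorial := by exact_mod_cast a.factorial_pos
    calc (((i + a + 1).factorial : ℝ))⁻¹ * ‖A ^ i * X * A ^ a‖
        ≤ ((i.factorial : ℝ)⁻¹ * (a.factorial : ℝ)⁻¹) * (‖A‖ ^ i * ‖X‖ * ‖A‖ ^ a) :=
          mul_le_mul (inv_factorial_add_le i a) (norm_tri_le A i a X) (norm_nonneg _)
            (by positivity)
      _ = (‖X‖ * (‖A‖ ^ i / i.factorial)) * (‖A‖ ^ a / a.factorial) := by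
          simp only [div_eq_mul_inv]
          ring
  have hw : Summable w' := Summable.of_norm_bounded hprod_w hbound_w
  have h_eval : ∀ k : ℕ, f' (k + 1) A X = ∑ q ∈ antidiagonal k, w' q := by
    intro k
    show (((k + 1).factorial : ℝ))⁻¹ •
        (∑ i ∈ range (k + 1), mulLR (A ^ i) (A ^ (k + 1 - 1 - i)))
        X = _
    rw [ContinuousLinearMap.coe_sum', Finset.sum_apply]
    rw [Nat.sum_antidiagonal_eq_sum_range_succ_mk]
    rw [Finset.smul_sum]
    refine Finset.sum_congr rfl fun i hi => ?_
    have hik : i ≤ k := Nat.lt_succ_iff.mp (mem_range.mp hi)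
    show (((k + 1).factorial : ℝ))⁻¹ • mulLR (A ^ i) (A ^ (k + 1 - 1 - i)) X
      = (((i + (k - i) + 1).factorial : ℝ))⁻¹ • (A ^ i * X * A ^ (k - i))
    have e1 : k + 1 - 1 - i = k - i := by omega
    have e2 : i + (k - i) = k := by omega
    rw [e1, e2, mulLR_apply]
  have hsum_f'AX : Summable (fun N : ℕ => f' N A X) := by
    refine Summable.of_norm_bounded (hub.mul_right ‖X‖) fun N => ?_
    calc ‖f' N A X‖ ≤ ‖f' N A‖ * ‖X‖ := (f' N A).le_opNorm X
      _ ≤ _ := mul_le_mul_of_nonneg_right (hbnd N A hballA) (norm_nonneg X)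
  have hzero : f' 0 A X = 0 := by
    show (((0:ℕ).factorial : ℝ))⁻¹ • (∑ i ∈ range 0, mulLR (A ^ i) (A ^ (0 - 1 - i))) X = 0
    simp
  rw [happly, Summable.tsum_eq_zero_add hsum_f'AX, hzero, zero_add, tsum_congr h_eval,
    (grouping hw).2]
  -- it remains : ∑' q, w' q = ∑' p, uu p
  symm
  -- the triple expansion `vv`
  set vv : (ℕ × ℕ) × ℕ → Matrix (Fin n) (Fin n) ℝ :=
    fun x => (coefE x.1.1 x.1.2 * ((x.2.factorial : ℝ))⁻¹) •
      (A ^ (x.1.2 + x.2) * X * A ^ x.1.1) with hvv_def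
  have hbound_v : ∀ x : (ℕ × ℕ) × ℕ,
      ‖vv x‖ ≤ ((‖X‖ * (‖A‖ ^ x.1.1 / x.1.1.factorial)) * (‖A‖ ^ x.1.2 / x.1.2.factorial))
        * (‖A‖ ^ x.2 / x.2.factorial) := by
    rintro ⟨⟨a, b⟩, m⟩
    show ‖(coefE a b * ((m.factorial : ℝ))⁻¹) • (A ^ (b + m) * X * A ^ a)‖ ≤ _
    rw [norm_smul, Real.norm_eq_abs, abs_mul]
    have habs : |((m.factorial : ℝ))⁻¹| = ((m.factorial : ℝ))⁻¹ :=
      abs_of_nonneg (by positivity)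
    rw [habs]
    have h1 : (0:ℝ) < a.factorial := by exact_mod_cast a.factorial_pos
    have h2 : (0:ℝ) < b.factorial := by exact_mod_cast b.factorial_pos
    have h3 : (0:ℝ) < m.factorial := by exact_mod_cast m.factorial_pos
    calc (|coefE a b| * ((m.factorial : ℝ))⁻¹) * ‖A ^ (b + m) * X * A ^ a‖
        ≤ (((a.factorial : ℝ)⁻¹ * (b.factorial : ℝ)⁻¹) * ((m.factorial : ℝ))⁻¹)
            * (‖A‖ ^ (b + m) * ‖X‖ * ‖A‖ ^ a) :=
          mul_le_mul
            (mul_le_mul_of_nonneg_right (coefE_abs_le a b) (by positivity))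
            (norm_tri_le A (b + m) a X) (norm_nonneg _) (by positivity)
      _ = ((‖X‖ * (‖A‖ ^ a / a.factorial)) * (‖A‖ ^ b / b.factorial))
            * (‖A‖ ^ m / m.factorial) := by
          rw [pow_add]
          simp only [div_eq_mul_inv]
          ring
  have hv : Summable vv :=
    Summable.of_norm_bounded
      (hprod_w.mul_of_nonneg hsumr (fun p => by positivity) (fun m => by positivity))
      hbound_v
  have h_u_eq : ∀ p : ℕ × ℕ, uu p = ∑' m : ℕ, vv (p, m) := by
    rintro ⟨a, b⟩
    have hexpE : E = ∑' m : ℕ, ((m.factorial : ℝ))⁻¹ • A ^ m := by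
      rw [hE]
      exact congrFun (NormedSpace.exp_eq_tsum ℝ) A
    calc uu (a, b) = (coefE a b • mulLR (A ^ b) (X * A ^ a)) E := by
          show coefE a b • (A ^ b * (E * X) * A ^ a) = _
          rw [ContinuousLinearMap.smul_apply, mulLR_apply]
          congr 1
          simp [mul_assoc]
      _ = ∑' m : ℕ, (coefE a b • mulLR (A ^ b) (X * A ^ a))
            (((m.factorial : ℝ))⁻¹ • A ^ m) := by
          rw [hexpE]
          exact (coefE a b • mulLR (A ^ b) (X * A ^ a)).map_tsum
            (NormedSpace.expSeries_summable' (𝕂 := ℝ) A)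
      _ = ∑' m : ℕ, vv ((a, b), m) := by
          refine tsum_congr fun m => ?_
          rw [ContinuousLinearMap.smul_apply, ContinuousLinearMap.map_smul, mulLR_apply]
          show coefE a b • (((m.factorial : ℝ))⁻¹ • (A ^ b * A ^ m * (X * A ^ a)))
            = (coefE a b * ((m.factorial : ℝ))⁻¹) • (A ^ (b + m) * X * A ^ a)
          rw [smul_smul]
          congr 1
          rw [pow_add]
          simp [mul_assoc]
  have step1 : ∑' p : ℕ × ℕ, uu p = ∑' x : (ℕ × ℕ) × ℕ, vv x :=
    (tsum_congr h_u_eq).trans (Summable.tsum_prod' hv (fun p => hv.prod_factor p)).symm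
  set v2 : ℕ × (ℕ × ℕ) → Matrix (Fin n) (Fin n) ℝ :=
    fun y => (coefE y.1 y.2.1 * ((y.2.2.factorial : ℝ))⁻¹) •
      (A ^ (y.2.1 + y.2.2) * X * A ^ y.1) with hv2_def
  have hvv2 : vv = fun x => v2 ((Equiv.prodAssoc ℕ ℕ ℕ) x) := rfl
  have hv2 : Summable v2 :=
    ((Equiv.prodAssoc ℕ ℕ ℕ).summable_iff (f := v2)).1 hv
  have step2 : ∑' x : (ℕ × ℕ) × ℕ, vv x = ∑' y : ℕ × (ℕ × ℕ), v2 y := by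
    rw [hvv2]
    exact (Equiv.prodAssoc ℕ ℕ ℕ).tsum_eq v2
  have hslice : ∀ a : ℕ, Summable (fun q : ℕ × ℕ => v2 (a, q)) :=
    fun a => hv2.prod_factor a
  have step3 : ∑' y : ℕ × (ℕ × ℕ), v2 y = ∑' (a : ℕ), ∑' (q : ℕ × ℕ), v2 (a, q) :=
    Summable.tsum_prod' hv2 hslice
  have hinner : ∀ a : ℕ, ∑' q : ℕ × ℕ, v2 (a, q) = ∑' i : ℕ, w' (i, a) := by
    intro a
    rw [← (grouping (hslice a)).2]
    refine tsum_congr fun i => ?_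
    have hterm : ∀ q ∈ antidiagonal i,
        v2 (a, q) = (coefE a q.1 * ((q.2.factorial : ℝ))⁻¹) • (A ^ i * X * A ^ a) := by
      intro q hq
      have hqi : q.1 + q.2 = i := mem_antidiagonal.mp hq
      show (coefE a q.1 * ((q.2.factorial : ℝ))⁻¹) • (A ^ (q.1 + q.2) * X * A ^ a) = _
      rw [hqi]
    rw [Finset.sum_congr rfl hterm, ← Finset.sum_smul, coefE_sum a i]
  have hwswap : Summable (fun p : ℕ × ℕ => w' (p.2, p.1)) :=
    ((Equiv.prodComm ℕ ℕ).summable_iff (f := w')).2 hw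
  have step4 : ∑' (a : ℕ), ∑' (i : ℕ), w' (i, a) = ∑' q : ℕ × ℕ, w' q := by
    have h1 : ∑' p : ℕ × ℕ, w' (p.2, p.1) = ∑' (a : ℕ), ∑' (i : ℕ), w' (i, a) :=
      Summable.tsum_prod' hwswap
        (fun a => hw.comp_injective (fun x y h => by simpa using congrArg Prod.fst h))
    rw [← h1]
    exact (Equiv.prodComm ℕ ℕ).tsum_eq w'
  exact step1.trans (step2.trans (step3.trans ((tsum_congr hinner).trans step4)))
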